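/- Let the exponential mechanism select candidate h from a finite set R of size |R| with probability proportional to exp(epsilon * s(D,h)/(2*Delta)), and let s_max = max_{h in R} s(D,h). Then for any t > 0, Pr[s(D, output) < s_max - 2*Delta*(ln|R| + t)/epsilon] <= exp(-t). -/

import Mathlib

open Real Finset Classical

/-- Utility of the exponential mechanism: the probability (under the distribution with
`Pr[h] ∝ exp (ε s(D,h) / (2Δ))`) of outputting a candidate whose score is below
`s_max - 2Δ(ln |R| + t)/ε` is at most `exp (-t)`. -/
theorem exponential_mechanism_utility {R : Type*} [Fintype R] [Nonempty R]
    (s : R → ℝ) (Δ ε t : ℝ) (hΔ : 0 < Δ) (hε : 0 < ε) (ht : 0 < t) :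
    (∑ h ∈ Finset.univ.filter
        (fun h : R =>
          s h < (⨆ h' : R, s h') - 2 * Δ * (Real.log (Fintype.card R) + t) / ε),
        Real.exp (ε * s h / (2 * Δ))) /
      (∑ h : R, Real.exp (ε * s h / (2 * Δ))) ≤ Real.exp (-t) := by
  set A : ℝ := ⨆ h' : R, s h' with hA
  set c : ℝ := 2 * Δ * (Real.log (Fintype.card R) + t) / ε with hc
  set N : ℕ := Fintype.card R with hN
  have hNpos : 0 < (N : ℝ) := by exact_mod_cast Fintype.card_pos
  obtain ⟨h0, hh0⟩ := Finite.exists_max s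
  have hsuple : A ≤ s h0 := ciSup_le hh0
  have h2Δ : 0 < 2 * Δ := by linarith
  -- denominator lower bound
  have hden : Real.exp (ε * A / (2 * Δ)) ≤ ∑ h : R, Real.exp (ε * s h / (2 * Δ)) := by
    calc Real.exp (ε * A / (2 * Δ)) ≤ Real.exp (ε * s h0 / (2 * Δ)) := by
          apply Real.exp_le_exp.mpr
          gcongr
      _ ≤ ∑ h : R, Real.exp (ε * s h / (2 * Δ)) :=
          Finset.single_le_sum (f := fun h => Real.exp (ε * s h / (2 * Δ))) (fun h _ => (Real.exp_pos _).le) (Finset.mem_univ h0)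
  have hdenpos : 0 < ∑ h : R, Real.exp (ε * s h / (2 * Δ)) :=
    lt_of_lt_of_le (Real.exp_pos _) hden
  rw [div_le_iff₀ hdenpos]
  -- numerator upper bound
  have hnum : (∑ h ∈ Finset.univ.filter (fun h : R => s h < A - c),
      Real.exp (ε * s h / (2 * Δ))) ≤ N * Real.exp (ε * (A - c) / (2 * Δ)) := by
    calc (∑ h ∈ Finset.univ.filter (fun h : R => s h < A - c),
        Real.exp (ε * s h / (2 * Δ)))
        ≤ ∑ _h ∈ Finset.univ.filter (fun h : R => s h < A - c),
          Real.exp (ε * (A - c) / (2 * Δ)) := by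
          apply Finset.sum_le_sum
          intro h hh
          simp only [Finset.mem_filter] at hh
          apply Real.exp_le_exp.mpr
          gcongr
          exact hh.2.le
      _ = (Finset.univ.filter (fun h : R => s h < A - c)).card *
            Real.exp (ε * (A - c) / (2 * Δ)) := by
          rw [Finset.sum_const, nsmul_eq_mul]
      _ ≤ N * Real.exp (ε * (A - c) / (2 * Δ)) := by
          apply mul_le_mul_of_nonneg_right _ (Real.exp_pos _).le
          exact_mod_cast Finset.card_le_card (Finset.filter_subset _ _)
  have hkey : (N : ℝ) * Real.exp (ε * (A - c) / (2 * Δ))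
      = Real.exp (-t) * Real.exp (ε * A / (2 * Δ)) := by
    have hεc : ε * c / (2 * Δ) = Real.log N + t := by
      field_simp [hc]
      rw [hc]; field_simp
    have : ε * (A - c) / (2 * Δ) = ε * A / (2 * Δ) - (Real.log N + t) := by
      rw [← hεc]; ring
    rw [this, Real.exp_sub, Real.exp_add, Real.exp_log hNpos, Real.exp_neg]
    field_simp
  calc (∑ h ∈ Finset.univ.filter (fun h : R => s h < A - c),
      Real.exp (ε * s h / (2 * Δ)))
      ≤ N * Real.exp (ε * (A - c) / (2 * Δ)) := hnum
    _ = Real.exp (-t) * Real.exp (ε * A / (2 * Δ)) := hkey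
    _ ≤ Real.exp (-t) * ∑ h : R, Real.exp (ε * s h / (2 * Δ)) :=
        mul_le_mul_of_nonneg_left hden (Real.exp_pos _).le
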